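/- The clique-expansion G' of a claw-free graph G (each vertex replaced by a (k+1)-clique, each edge by a complete join) is claw-free. -/

import Mathlib

open SimpleGraph

/-- Closed neighborhood of a set of vertices: `N[S]`. -/
def closedNbhd {V : Type*} (G : SimpleGraph V) (S : Set V) : Set V :=
  S ∪ {v | ∃ u ∈ S, G.Adj u v}

/-- The monitored sets `P^i(S)` of the k-power domination process:
`P^0(S) = N[S]`, `P^{i+1}(S) = ⋃ {N[v] : v ∈ P^i(S), |N[v] \ P^i(S)| ≤ k}`. -/
def monitored {V : Type*} (G : SimpleGraph V) (k : ℕ) (S : Set V) : ℕ → Set V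
  | 0 => closedNbhd G S
  | i + 1 => {w | ∃ v ∈ monitored G k S i,
      (closedNbhd G {v} \ monitored G k S i).ncard ≤ k ∧ w ∈ closedNbhd G {v}}

/-- `P^∞(S)`, realized as `P^{|V|}(S)` on a finite vertex type. -/
def monitoredInf {V : Type*} (G : SimpleGraph V) (k : ℕ) (S : Set V) : Set V :=
  monitored G k S (Nat.card V)

/-- `S` is a k-power dominating set. -/
def IsKPDS {V : Type*} (G : SimpleGraph V) (k : ℕ) (S : Set V) : Prop :=
  monitoredInf G k S = Set.univ

/-- The k-power domination number `γ_{p,k}(G)`. -/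
noncomputable def powerDomNumber {V : Type*} (G : SimpleGraph V) (k : ℕ) : ℕ :=
  sInf {m | ∃ S : Set V, S.Finite ∧ S.ncard = m ∧ IsKPDS G k S}

/-- A k-fort: a nonempty set `F` such that every vertex of `N(F) \ F`
has at least `k+1` neighbors in `F`. -/
def IsKFort {V : Type*} (G : SimpleGraph V) (k : ℕ) (F : Set V) : Prop :=
  F.Nonempty ∧ ∀ v ∈ closedNbhd G F \ F, k + 1 ≤ (G.neighborSet v ∩ F).ncard

/-- Claw-free: no induced `K_{1,3}`. -/
def ClawFree {V : Type*} (G : SimpleGraph V) : Prop :=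
  ∀ u a b c : V, G.Adj u a → G.Adj u b → G.Adj u c → a ≠ b → a ≠ c → b ≠ c →
    G.Adj a b ∨ G.Adj a c ∨ G.Adj b c

/-- `r`-regular. -/
def RegularOfDegree {V : Type*} (G : SimpleGraph V) (r : ℕ) : Prop :=
  ∀ v : V, (G.neighborSet v).ncard = r

/-- The domination number `γ(G)`. -/
noncomputable def domNumber {V : Type*} (G : SimpleGraph V) : ℕ :=
  sInf {m | ∃ S : Set V, S.Finite ∧ S.ncard = m ∧
    ∀ v : V, v ∈ S ∨ ∃ u ∈ S, G.Adj v u}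

/-- The total domination number `γ_t(G)`. -/
noncomputable def totalDomNumber {V : Type*} (G : SimpleGraph V) : ℕ :=
  sInf {m | ∃ S : Set V, S.Finite ∧ S.ncard = m ∧ ∀ v : V, ∃ u ∈ S, G.Adj v u}

/-- Replace each vertex of `G` by a clique of size `m`, and each edge by a complete
join between the corresponding cliques. -/
def cliqueExpansion {V : Type*} (G : SimpleGraph V) (m : ℕ) :
    SimpleGraph (V × Fin m) where
  Adj p p' := G.Adj p.1 p'.1 ∨ (p.1 = p'.1 ∧ p.2 ≠ p'.2)
  symm := by
    constructor
    intro p p' h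
    rcases h with h | ⟨h1, h2⟩
    · exact Or.inl h.symm
    · exact Or.inr ⟨h1.symm, h2.symm⟩
  loopless := by
    constructor
    intro p h
    rcases h with h | ⟨_, h2⟩
    · exact G.irrefl h
    · exact h2 rfl

theorem cliqueExpansion_clawFree {V : Type*} (G : SimpleGraph V) (k : ℕ)
    (hcf : ClawFree G) : ClawFree (cliqueExpansion G (k + 1)) := by
  rintro u a b c hua hub huc hab hac hbc
  simp only [cliqueExpansion] at *
  -- helper: if two vertices have equal first coord and are distinct, they're adjacent
  have pair : ∀ p q : V × Fin (k+1), p ≠ q → p.1 = q.1 → G.Adj p.1 q.1 ∨ (p.1 = q.1 ∧ p.2 ≠ q.2) := by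
    intro p q hne h1
    exact Or.inr ⟨h1, fun h2 => hne (Prod.ext h1 h2)⟩
  by_cases hab1 : a.1 = b.1
  · exact Or.inl (pair a b hab hab1)
  by_cases hac1 : a.1 = c.1
  · exact Or.inr (Or.inl (pair a c hac hac1))
  by_cases hbc1 : b.1 = c.1
  · exact Or.inr (Or.inr (pair b c hbc hbc1))
  -- now first coords of a,b,c pairwise distinct
  rcases hua with hua | ⟨hua, _⟩ <;> rcases hub with hub | ⟨hub, _⟩ <;>
    rcases huc with huc | ⟨huc, _⟩
  · rcases hcf u.1 a.1 b.1 c.1 hua hub huc hab1 hac1 hbc1 with h | h | h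
    · exact Or.inl (Or.inl h)
    · exact Or.inr (Or.inl (Or.inl h))
    · exact Or.inr (Or.inr (Or.inl h))
  · exact Or.inr (Or.inl (Or.inl (huc ▸ hua).symm))
  · exact Or.inl (Or.inl (hub ▸ hua).symm)
  · exact (hbc1 (hub.symm.trans huc)).elim
  · exact Or.inl (Or.inl (hua ▸ hub))
  · exact (hac1 (hua.symm.trans huc)).elim
  · exact (hab1 (hua.symm.trans hub)).elim
  · exact (hab1 (hua.symm.trans hub)).elim
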